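/- (The self-similar profile solves the thin-film equation.) Fix L > 0. Define u : ℝ → EuclideanSpace ℝ (Fin 2) → ℝ for t > 0 by u(t, x) = t^{-1/3}·(L² - ‖x‖²·t^{-1/3})² / 192. Then for every t > 0 and every x ∈ EuclideanSpace ℝ (Fin 2), ∂_t u(t,x) + ⟨∇_x u(t,·)(x), ∇_x(Δ_x u(t,·))(x)⟩ + u(t,x)·Δ_x(Δ_x u(t,·))(x) = 0; that is, u satisfies ∂_t u + ∇·( u ∇Δu ) = 0 (equation (2.9) with γ = 1 and mobility f(u) = u), using the expansion ∇·(u∇Δu) = ∇u·∇Δu + u·Δ²u. -/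

import Mathlib

/-- The Laplacian of a function on two-dimensional Euclidean space: the sum of the
second partial derivatives in the directions of the standard orthonormal basis. -/
noncomputable def lap2 (u : EuclideanSpace ℝ (Fin 2) → ℝ)
    (x : EuclideanSpace ℝ (Fin 2)) : ℝ :=
  ∑ i : Fin 2,
    fderiv ℝ (fun y => fderiv ℝ u y (EuclideanSpace.single i (1 : ℝ))) x
      (EuclideanSpace.single i (1 : ℝ))

open scoped RealInnerProductSpace

section helpers

/-- Derivative of a radial quadratic-in-`‖y‖²` function. -/
lemma hasFDerivAt_qf (A B C : ℝ) (x : EuclideanSpace ℝ (Fin 2)) :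
    HasFDerivAt (fun y : EuclideanSpace ℝ (Fin 2) => A * ‖y‖ ^ 2 ^ 2 + B * ‖y‖ ^ 2 + C)
      ((2 * (2 * A * ‖x‖ ^ 2 + B)) • innerSL ℝ x) x := by
  have h : HasFDerivAt (fun y : EuclideanSpace ℝ (Fin 2) => ‖y‖ ^ 2)
      ((2 : ℕ) • innerSL ℝ x) x := (hasStrictFDerivAt_norm_sq x).hasFDerivAt
  have h4 : HasFDerivAt (fun y : EuclideanSpace ℝ (Fin 2) => ‖y‖ ^ 2 ^ 2)
      (‖x‖ ^ 2 • ((2 : ℕ) • innerSL ℝ x) + ‖x‖ ^ 2 • ((2 : ℕ) • innerSL ℝ x)) x := by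
    have e : (fun y : EuclideanSpace ℝ (Fin 2) => ‖y‖ ^ 2 * ‖y‖ ^ 2)
        = fun y : EuclideanSpace ℝ (Fin 2) => ‖y‖ ^ 2 ^ 2 := by
      funext y; ring
    have := h.mul h
    rw [← e]; exact this
  have h5 : HasFDerivAt (fun y : EuclideanSpace ℝ (Fin 2) => A * ‖y‖ ^ 2 ^ 2 + B * ‖y‖ ^ 2 + C) _ x :=
    ((h4.const_mul A).add (h.const_mul B)).add_const C
  refine h5.congr_fderiv ?_
  ext v
  simp [ContinuousLinearMap.smul_apply, smul_smul]
  ring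

lemma fderiv_qf_apply (A B C : ℝ) (x v : EuclideanSpace ℝ (Fin 2)) :
    fderiv ℝ (fun y : EuclideanSpace ℝ (Fin 2) => A * ‖y‖ ^ 2 ^ 2 + B * ‖y‖ ^ 2 + C) x v
      = (2 * (2 * A * ‖x‖ ^ 2 + B)) * ⟪x, v⟫ := by
  rw [(hasFDerivAt_qf A B C x).fderiv]
  simp

lemma norm_sq_eq_sum2 (x : EuclideanSpace ℝ (Fin 2)) :
    ‖x‖ ^ 2 = x 0 ^ 2 + x 1 ^ 2 := by
  rw [EuclideanSpace.norm_eq, Real.sq_sqrt (by positivity)]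
  simp [Fin.sum_univ_two, sq_abs]

lemma lap2_qf (A B C : ℝ) (x : EuclideanSpace ℝ (Fin 2)) :
    lap2 (fun y : EuclideanSpace ℝ (Fin 2) => A * ‖y‖ ^ 2 ^ 2 + B * ‖y‖ ^ 2 + C) x
      = 16 * A * ‖x‖ ^ 2 + 4 * B := by
  have key : ∀ i : Fin 2,
      fderiv ℝ (fun y : EuclideanSpace ℝ (Fin 2) =>
        fderiv ℝ (fun z : EuclideanSpace ℝ (Fin 2) => A * ‖z‖ ^ 2 ^ 2 + B * ‖z‖ ^ 2 + C) y
          (EuclideanSpace.single i (1 : ℝ))) x (EuclideanSpace.single i (1 : ℝ))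
      = (2 * (2 * A * ‖x‖ ^ 2 + B)) + 8 * A * (x i) ^ 2 := by
    intro i
    have hfe : (fun y : EuclideanSpace ℝ (Fin 2) =>
        fderiv ℝ (fun z : EuclideanSpace ℝ (Fin 2) => A * ‖z‖ ^ 2 ^ 2 + B * ‖z‖ ^ 2 + C) y
          (EuclideanSpace.single i (1 : ℝ)))
        = fun y => (2 * (2 * A * ‖y‖ ^ 2 + B)) * y i := by
      funext y
      rw [fderiv_qf_apply]
      simp [EuclideanSpace.inner_single_right]
    rw [hfe]
    have h : HasFDerivAt (fun y : EuclideanSpace ℝ (Fin 2) => ‖y‖ ^ 2)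
        ((2 : ℕ) • innerSL ℝ x) x := (hasStrictFDerivAt_norm_sq x).hasFDerivAt
    have hc : HasFDerivAt (fun y : EuclideanSpace ℝ (Fin 2) => 2 * (2 * A * ‖y‖ ^ 2 + B))
        ((2 : ℝ) • ((2 * A) • ((2 : ℕ) • innerSL ℝ x))) x :=
      ((h.const_mul (2 * A)).add_const B).const_mul 2
    have hp : HasFDerivAt (fun y : EuclideanSpace ℝ (Fin 2) => y i)
        (EuclideanSpace.proj i : EuclideanSpace ℝ (Fin 2) →L[ℝ] ℝ) x := by
      refine (ContinuousLinearMap.hasFDerivAt _).congr_of_eventuallyEq ?_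
      exact Filter.Eventually.of_forall fun y => rfl
    have hmul : HasFDerivAt (fun y : EuclideanSpace ℝ (Fin 2) => 2 * (2 * A * ‖y‖ ^ 2 + B) * y i) _ x :=
      hc.mul hp
    rw [hmul.fderiv]
    fin_cases i <;> simp [EuclideanSpace.inner_single_right, smul_smul] <;> ring
  rw [lap2]
  rw [Fin.sum_univ_two, key 0, key 1, norm_sq_eq_sum2]
  ring

lemma gradient_qf (A B C : ℝ) (x : EuclideanSpace ℝ (Fin 2)) :
    gradient (fun y : EuclideanSpace ℝ (Fin 2) => A * ‖y‖ ^ 2 ^ 2 + B * ‖y‖ ^ 2 + C) x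
      = (2 * (2 * A * ‖x‖ ^ 2 + B)) • x := by
  have hg : HasGradientAt (fun y : EuclideanSpace ℝ (Fin 2) => A * ‖y‖ ^ 2 ^ 2 + B * ‖y‖ ^ 2 + C)
      ((2 * (2 * A * ‖x‖ ^ 2 + B)) • x) x := by
    rw [hasGradientAt_iff_hasFDerivAt]
    refine (hasFDerivAt_qf A B C x).congr_fderiv ?_
    ext v
    simp [InnerProductSpace.toDual_apply_apply, real_inner_smul_left]
  exact hg.gradient

end helpers

/-- The self-similar profile `u(t,x) = t^{-1/3}(L² - ‖x‖² t^{-1/3})²/192` solves the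
thin-film equation `∂ₜu + ∇u·∇Δu + u·Δ²u = 0`
(equation (2.9) with `γ = 1` and mobility `f(u) = u`). -/
theorem self_similar_solves_thin_film (L : ℝ) (hL : 0 < L)
    (U : ℝ → EuclideanSpace ℝ (Fin 2) → ℝ)
    (hU : ∀ s : ℝ, ∀ y : EuclideanSpace ℝ (Fin 2),
      U s y = s ^ (-(1 / 3) : ℝ) * (L ^ 2 - ‖y‖ ^ 2 * s ^ (-(1 / 3) : ℝ)) ^ 2 / 192) :
    ∀ t : ℝ, 0 < t → ∀ x : EuclideanSpace ℝ (Fin 2),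
      deriv (fun s => U s x) t
        + (inner ℝ (gradient (U t) x) (gradient (fun y => lap2 (U t) y) x) : ℝ)
        + U t x * lap2 (fun y => lap2 (U t) y) x = 0 := by
  intro t ht x
  set a : ℝ := t ^ (-(1 / 3) : ℝ) with ha
  -- time derivative
  have hw : HasDerivAt (fun s : ℝ => s ^ (-(1 / 3) : ℝ))
      ((-(1 / 3)) * t ^ ((-(1 / 3) : ℝ) - 1)) t :=
    Real.hasDerivAt_rpow_const (Or.inl ht.ne')
  have hat : t ^ ((-(1 / 3) : ℝ) - 1) = a ^ 4 := by
    rw [show ((-(1 / 3) : ℝ) - 1) = (-(1 / 3) : ℝ) * ((4 : ℕ) : ℝ) by norm_num,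
      Real.rpow_mul ht.le, Real.rpow_natCast]
  have hdU : HasDerivAt (fun s => U s x)
      (((-(1 / 3)) * a ^ 4 * (L ^ 2 - ‖x‖ ^ 2 * a) ^ 2
        + a * (2 * (L ^ 2 - ‖x‖ ^ 2 * a) * (-(‖x‖ ^ 2 * ((-(1 / 3)) * a ^ 4))))) / 192) t := by
    have hfun : (fun s => U s x)
        = fun s => s ^ (-(1 / 3) : ℝ) * (L ^ 2 - ‖x‖ ^ 2 * s ^ (-(1 / 3) : ℝ)) ^ 2 / 192 := by
      funext s; rw [hU]
    rw [hfun]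
    have hsq : HasDerivAt (fun s : ℝ => (L ^ 2 - ‖x‖ ^ 2 * s ^ (-(1 / 3) : ℝ)) ^ 2)
        (2 * (L ^ 2 - ‖x‖ ^ 2 * a) * (-(‖x‖ ^ 2 * ((-(1 / 3)) * a ^ 4)))) t := by
      have : HasDerivAt (fun s : ℝ => (L ^ 2 - ‖x‖ ^ 2 * s ^ (-(1 / 3) : ℝ)) ^ 2) _ t :=
        ((hw.const_mul (‖x‖ ^ 2)).const_sub (L ^ 2)).pow 2
      rw [hat] at this
      convert this using 1
      ring
    have hw' : HasDerivAt (fun s : ℝ => s ^ (-(1 / 3) : ℝ)) ((-(1 / 3)) * a ^ 4) t := by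
      rw [← hat]; exact hw
    exact (hw'.mul hsq).div_const 192
  rw [hdU.deriv]
  -- spatial part
  have hUt : U t = fun y : EuclideanSpace ℝ (Fin 2) =>
      (a ^ 3 / 192) * ‖y‖ ^ 2 ^ 2 + (-(L ^ 2 * a ^ 2) / 96) * ‖y‖ ^ 2 + (a * L ^ 4 / 192) := by
    funext y; rw [hU]; ring
  rw [hUt]
  have hlf : (fun y : EuclideanSpace ℝ (Fin 2) =>
      lap2 (fun z : EuclideanSpace ℝ (Fin 2) =>
        (a ^ 3 / 192) * ‖z‖ ^ 2 ^ 2 + (-(L ^ 2 * a ^ 2) / 96) * ‖z‖ ^ 2 + (a * L ^ 4 / 192)) y)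
      = fun y : EuclideanSpace ℝ (Fin 2) =>
        (0 : ℝ) * ‖y‖ ^ 2 ^ 2 + (16 * (a ^ 3 / 192)) * ‖y‖ ^ 2 + (4 * (-(L ^ 2 * a ^ 2) / 96)) := by
    funext y
    rw [lap2_qf]
    ring
  rw [hlf, lap2_qf, gradient_qf, gradient_qf, real_inner_smul_left, real_inner_smul_right,
    real_inner_self_eq_norm_sq]
  ring
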